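/- Leave-one-out stability of kernel ridge regression: with ĝ the KRR estimator trained on all N+1 observations with effective regularization λN/(N+1) and f̂₍ᵢ₎ the estimator trained on the N observations excluding (xᵢ,yᵢ), one has ‖f̂₍ᵢ₎ − ĝ‖_K ≤ (κ/(Nλ)) |ĝ(xᵢ) − yᵢ|. -/

import Mathlib

open Finset

lemma quad_lin_zero (B C : ℝ) (hC : 0 ≤ C) (h : ∀ s : ℝ, 0 ≤ B * s + C * s ^ 2) :
    B = 0 := by
  have h1 : (0:ℝ) < C + 1 := by linarith
  have key := h (-B / (C + 1))
  have e : B * (-B / (C + 1)) + C * (-B / (C + 1)) ^ 2 = -(B ^ 2) / (C + 1) ^ 2 := by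
    field_simp; ring
  rw [e] at key
  have hpos : (0:ℝ) < (C + 1) ^ 2 := by positivity
  have hB2 : 0 ≤ -B ^ 2 := by
    by_contra hc
    push_neg at hc
    have : -B ^ 2 / (C + 1) ^ 2 < 0 := div_neg_of_neg_of_pos hc hpos
    linarith
  nlinarith [sq_nonneg B]

lemma min_expand {H : Type*} [NormedAddCommGroup H] [InnerProductSpace ℝ H]
    {ι : Type*} [Fintype ι] (S : Finset ι) (Kx : ι → H) (y : ι → ℝ) (a lam : ℝ)
    (ha : 0 ≤ a) (hlam : 0 ≤ lam) (g : H)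
    (hg : ∀ f : H, a * ∑ j ∈ S, ((inner ℝ g (Kx j) : ℝ) - y j) ^ 2 + lam * ‖g‖ ^ 2 ≤
                   a * ∑ j ∈ S, ((inner ℝ f (Kx j) : ℝ) - y j) ^ 2 + lam * ‖f‖ ^ 2)
    (h : H) :
    a * ∑ j ∈ S, ((inner ℝ (g + h) (Kx j) : ℝ) - y j) ^ 2 + lam * ‖g + h‖ ^ 2 =
      (a * ∑ j ∈ S, ((inner ℝ g (Kx j) : ℝ) - y j) ^ 2 + lam * ‖g‖ ^ 2)
      + (a * ∑ j ∈ S, ((inner ℝ h (Kx j) : ℝ)) ^ 2 + lam * ‖h‖ ^ 2) := by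
  set B : ℝ := 2 * a * ∑ j ∈ S, (((inner ℝ g (Kx j) : ℝ) - y j) * (inner ℝ h (Kx j) : ℝ))
      + 2 * lam * (inner ℝ g h : ℝ) with hB
  set C : ℝ := a * ∑ j ∈ S, ((inner ℝ h (Kx j) : ℝ)) ^ 2 + lam * ‖h‖ ^ 2 with hCdef
  have expand : ∀ s : ℝ,
      a * ∑ j ∈ S, ((inner ℝ (g + s • h) (Kx j) : ℝ) - y j) ^ 2 + lam * ‖g + s • h‖ ^ 2 =
      (a * ∑ j ∈ S, ((inner ℝ g (Kx j) : ℝ) - y j) ^ 2 + lam * ‖g‖ ^ 2) + B * s + C * s ^ 2 := by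
    intro s
    have h1 : ∀ j ∈ S, ((inner ℝ (g + s • h) (Kx j) : ℝ) - y j) ^ 2
        = (((inner ℝ g (Kx j) : ℝ) - y j) ^ 2)
          + ((((inner ℝ g (Kx j) : ℝ) - y j) * (inner ℝ h (Kx j) : ℝ)) * (2 * s)
          + ((inner ℝ h (Kx j) : ℝ) ^ 2) * s ^ 2) := by
      intro j _
      rw [inner_add_left, real_inner_smul_left]; ring
    have h2 : ‖g + s • h‖ ^ 2 = ‖g‖ ^ 2 + (2 * (inner ℝ g h : ℝ)) * s + ‖h‖ ^ 2 * s ^ 2 := by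
      rw [norm_add_sq_real, real_inner_smul_right, norm_smul]
      simp [mul_pow, sq_abs]; ring
    rw [Finset.sum_congr rfl h1, Finset.sum_add_distrib, Finset.sum_add_distrib,
      ← Finset.sum_mul, ← Finset.sum_mul, h2, hB, hCdef]
    ring
  have hC : 0 ≤ C := by
    have : 0 ≤ ∑ j ∈ S, ((inner ℝ h (Kx j) : ℝ)) ^ 2 :=
      Finset.sum_nonneg fun j _ => sq_nonneg _
    have := sq_nonneg ‖h‖
    positivity
  have hB0 : B = 0 := by
    apply quad_lin_zero B C hC
    intro s
    have := hg (g + s • h)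
    rw [expand s] at this
    linarith
  have := expand 1
  rw [one_smul] at this
  rw [this, hB0]
  ring

/-- Leave-one-out stability of KRR: given `N+1` observations, with `ĝ` the KRR estimator
trained on all of them (objective `(1/N)∑_{j=1}^{N+1}(f(x_j)−y_j)² + λ‖f‖²_K`, i.e.
effective regularization `Nλ/(N+1)`) and `f̂₍ᵢ₎` the estimator trained on the `N`
observations excluding the `i`-th, one has
`‖f̂₍ᵢ₎ − ĝ‖_K ≤ (κ/(Nλ)) |ĝ(xᵢ) − yᵢ|`.  The RKHS is modeled by a Hilbert space `H`
with feature vectors `Kx j = K(x_j, ·)` so that `f(x_j) = ⟪f, Kx j⟫` and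
`‖Kx j‖ = √K(x_j,x_j) ≤ κ`. -/
theorem stmt_9 {H : Type*} [NormedAddCommGroup H] [InnerProductSpace ℝ H]
    (N : ℕ) (hN : 0 < N)
    (Kx : Fin (N + 1) → H) (y : Fin (N + 1) → ℝ)
    (κ : ℝ) (hκ : ∀ j, ‖Kx j‖ ≤ κ)
    (lam : ℝ) (hlam : 0 < lam)
    (ghat : H) (i : Fin (N + 1)) (fi : H)
    (hghat : ∀ f : H,
      (1 / N : ℝ) * ∑ j, ((inner ℝ ghat (Kx j) : ℝ) - y j) ^ 2 + lam * ‖ghat‖ ^ 2 ≤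
        (1 / N : ℝ) * ∑ j, ((inner ℝ f (Kx j) : ℝ) - y j) ^ 2 + lam * ‖f‖ ^ 2)
    (hfi : ∀ f : H,
      (1 / N : ℝ) * ∑ j ∈ Finset.univ.erase i, ((inner ℝ fi (Kx j) : ℝ) - y j) ^ 2
          + lam * ‖fi‖ ^ 2 ≤
        (1 / N : ℝ) * ∑ j ∈ Finset.univ.erase i, ((inner ℝ f (Kx j) : ℝ) - y j) ^ 2
          + lam * ‖f‖ ^ 2) :
    ‖fi - ghat‖ ≤ κ / (N * lam) * |(inner ℝ ghat (Kx i) : ℝ) - y i| := by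
  have hn : (0:ℝ) < N := by exact_mod_cast hN
  have ha : (0:ℝ) ≤ 1 / N := by positivity
  have hκ0 : 0 ≤ κ := le_trans (norm_nonneg (Kx i)) (hκ i)
  set h : H := fi - ghat with hh
  have E1 := min_expand Finset.univ Kx y (1/N) lam ha hlam.le ghat hghat h
  have E2 := min_expand (Finset.univ.erase i) Kx y (1/N) lam ha hlam.le fi hfi (ghat - fi)
  have egf : ghat + h = fi := by rw [hh]; abel
  have efg : fi + (ghat - fi) = ghat := by abel
  rw [egf] at E1
  rw [efg] at E2
  -- rewrite squares in E2
  have hsq : ∀ j, ((inner ℝ (ghat - fi) (Kx j) : ℝ)) ^ 2 = ((inner ℝ h (Kx j) : ℝ)) ^ 2 := by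
    intro j
    have : ghat - fi = -h := by rw [hh]; abel
    rw [this, inner_neg_left]; ring
  have hnrm : ‖ghat - fi‖ = ‖h‖ := by rw [hh, norm_sub_rev]
  simp only [hsq, hnrm] at E2
  -- split sums over univ
  have split1 : ∑ j, ((inner ℝ ghat (Kx j) : ℝ) - y j) ^ 2
      = ∑ j ∈ Finset.univ.erase i, ((inner ℝ ghat (Kx j) : ℝ) - y j) ^ 2
        + ((inner ℝ ghat (Kx i) : ℝ) - y i) ^ 2 :=
    (Finset.sum_erase_add _ _ (Finset.mem_univ i)).symm
  have split2 : ∑ j, ((inner ℝ fi (Kx j) : ℝ) - y j) ^ 2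
      = ∑ j ∈ Finset.univ.erase i, ((inner ℝ fi (Kx j) : ℝ) - y j) ^ 2
        + ((inner ℝ fi (Kx i) : ℝ) - y i) ^ 2 :=
    (Finset.sum_erase_add _ _ (Finset.mem_univ i)).symm
  have split3 : ∑ j, ((inner ℝ h (Kx j) : ℝ)) ^ 2
      = ∑ j ∈ Finset.univ.erase i, ((inner ℝ h (Kx j) : ℝ)) ^ 2
        + ((inner ℝ h (Kx i) : ℝ)) ^ 2 :=
    (Finset.sum_erase_add _ _ (Finset.mem_univ i)).symm
  rw [split1, split2] at E1
  set b : ℝ := (inner ℝ ghat (Kx i) : ℝ) - y i with hb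
  set t : ℝ := (inner ℝ h (Kx i) : ℝ) with ht
  have hat : (inner ℝ fi (Kx i) : ℝ) - y i = b + t := by
    rw [hb, ht, hh, inner_sub_left]; ring
  have hT : 0 ≤ ∑ j ∈ Finset.univ.erase i, ((inner ℝ h (Kx j) : ℝ)) ^ 2 :=
    Finset.sum_nonneg fun j _ => sq_nonneg _
  -- key inequality: lam * ‖h‖^2 ≤ (1/N) * b * t
  have key : lam * ‖h‖ ^ 2 ≤ (1/N) * (b * t) := by
    rw [split3] at E1
    rw [hat] at E1
    nlinarith [E1, E2, hT]
  have htb : |t| ≤ κ * ‖h‖ := by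
    calc |t| ≤ ‖h‖ * ‖Kx i‖ := abs_real_inner_le_norm h (Kx i)
    _ ≤ ‖h‖ * κ := by
        exact mul_le_mul_of_nonneg_left (hκ i) (norm_nonneg h)
    _ = κ * ‖h‖ := mul_comm _ _
  have key2 : lam * ‖h‖ ^ 2 ≤ (1/N) * (|b| * (κ * ‖h‖)) := by
    calc lam * ‖h‖ ^ 2 ≤ (1/N) * (b * t) := key
    _ ≤ (1/N) * |b * t| := by
        exact mul_le_mul_of_nonneg_left (le_abs_self _) ha
    _ = (1/N) * (|b| * |t|) := by rw [abs_mul]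
    _ ≤ (1/N) * (|b| * (κ * ‖h‖)) := by
        apply mul_le_mul_of_nonneg_left _ ha
        exact mul_le_mul_of_nonneg_left htb (abs_nonneg b)
  rcases eq_or_lt_of_le (norm_nonneg h) with h0 | h0
  · rw [← h0]
    positivity
  · have key3 : (N:ℝ) * lam * ‖h‖ ^ 2 ≤ |b| * (κ * ‖h‖) := by
      have h5 := mul_le_mul_of_nonneg_left key2 hn.le
      have hNne : (N:ℝ) ≠ 0 := ne_of_gt hn
      calc (N:ℝ) * lam * ‖h‖ ^ 2 = (N:ℝ) * (lam * ‖h‖ ^ 2) := by ring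
      _ ≤ (N:ℝ) * ((1/N) * (|b| * (κ * ‖h‖))) := h5
      _ = |b| * (κ * ‖h‖) := by field_simp
    have h4 : (N:ℝ) * lam * ‖h‖ ≤ κ * |b| := by
      refine le_of_mul_le_mul_right ?_ h0
      calc (N:ℝ) * lam * ‖h‖ * ‖h‖ = (N:ℝ) * lam * ‖h‖ ^ 2 := by ring
      _ ≤ |b| * (κ * ‖h‖) := key3
      _ = κ * |b| * ‖h‖ := by ring
    rw [div_mul_eq_mul_div, le_div_iff₀ (by positivity : (0:ℝ) < N * lam)]
    calc ‖h‖ * ((N:ℝ) * lam) = (N:ℝ) * lam * ‖h‖ := by ring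
    _ ≤ κ * |b| := h4
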